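/- Let k ≥ 1 and let m ≥ 2 be even. Then the sum over all tuples (b_1,...,b_m) of vectors in F_2^k of (-1)^(b_1·b_2 + b_2·b_3 + ... + b_{m-1}·b_m + b_m·b_1) equals 2^(mk/2 + k). -/

import Mathlib

open Finset

/-- Cyclic shift on `F_2^n`: `(shift x) i = x (i+1)`. -/
def shift (n : ℕ) (x : Fin n → ZMod 2) : Fin n → ZMod 2 := fun i => x (finRotate n i)

/-- Dot product on `F_2^n`. -/
def dot (n : ℕ) (x y : Fin n → ZMod 2) : ZMod 2 := ∑ i, x i * y i

/-- `(-1)^b` as an integer. -/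
def sgn (b : ZMod 2) : ℤ := if b = 0 then 1 else -1


lemma sgn_add : ∀ a b : ZMod 2, sgn (a + b) = sgn a * sgn b := by decide

lemma sgn_sum {ι : Type*} (s : Finset ι) (g : ι → ZMod 2) :
    sgn (∑ i ∈ s, g i) = ∏ i ∈ s, sgn (g i) := by
  classical
  induction s using Finset.induction with
  | empty => simp [sgn]
  | insert _ _ h ih => rw [Finset.sum_insert h, Finset.prod_insert h, sgn_add, ih]

lemma sum_sgn_mul : ∀ a : ZMod 2, (∑ t : ZMod 2, sgn (a * t)) = if a = 0 then 2 else 0 := by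
  decide

lemma key (k : ℕ) (w : Fin k → ZMod 2) :
    (∑ z : Fin k → ZMod 2, sgn (dot k w z)) = if w = 0 then 2 ^ k else 0 := by
  classical
  have h1 : ∀ z : Fin k → ZMod 2, sgn (dot k w z) = ∏ i, sgn (w i * z i) := fun z =>
    sgn_sum _ _
  simp only [h1]
  rw [← Fintype.prod_sum fun i t => sgn (w i * t)]
  simp only [sum_sgn_mul]
  by_cases hw : w = 0
  · subst hw; simp
  · rw [if_neg hw]
    obtain ⟨i, hi⟩ : ∃ i, w i ≠ 0 := by
      by_contra h; push_neg at h; exact hw (funext h)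
    exact Finset.prod_eq_zero (Finset.mem_univ i) (by rw [if_neg hi])

lemma dot_comm (k : ℕ) (x y : Fin k → ZMod 2) : dot k x y = dot k y x := by
  unfold dot; exact Finset.sum_congr rfl fun i _ => mul_comm _ _

lemma collapse (k : ℕ) (x y : Fin k → ZMod 2) :
    (∑ z : Fin k → ZMod 2, sgn (dot k x z) * sgn (dot k z y)) =
      if x = y then (2 : ℤ) ^ k else 0 := by
  classical
  have h1 : ∀ z, sgn (dot k x z) * sgn (dot k z y) = sgn (dot k (x + y) z) := by
    intro z
    rw [← sgn_add, dot_comm k z y]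
    congr 1
    unfold dot
    rw [← Finset.sum_add_distrib]
    exact Finset.sum_congr rfl fun i _ => by rw [Pi.add_apply, add_mul]
  simp only [h1]
  rw [key]
  congr 1
  have : ∀ a b : ZMod 2, a + b = 0 ↔ a = b := by decide
  simp only [eq_iff_iff]
  constructor
  · intro h; funext i; exact (this _ _).1 (congrFun h i)
  · intro h; subst h; funext i; exact (this _ _).2 rfl

/-- Cycle sum of length `n+1`. -/
def S (k n : ℕ) : ℤ :=
  ∑ b : Fin (n + 1) → (Fin k → ZMod 2), ∏ i, sgn (dot k (b i) (b (i + 1)))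

lemma sum_pi_succ {α : Type*} [Fintype α] [DecidableEq α] (n : ℕ)
    (F : (Fin (n + 1) → α) → ℤ) :
    (∑ b : Fin (n + 1) → α, F b) = ∑ x : α, ∑ b : Fin n → α, F (Fin.cons x b) := by
  rw [← (Fin.consEquiv fun _ : Fin (n+1) => α).sum_comp F, Fintype.sum_prod_type]
  rfl

lemma S_base (k : ℕ) : S k 1 = 2 ^ (2 * k) := by
  classical
  unfold S
  rw [← (piFinTwoEquiv fun _ => Fin k → ZMod 2).symm.sum_comp, Fintype.sum_prod_type]
  have h01 : ((0 : Fin 2) + 1) = 1 := by decide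
  have h10 : ((1 : Fin 2) + 1) = 0 := by decide
  have : ∀ x y : Fin k → ZMod 2,
      (∏ i : Fin 2, sgn (dot k ((piFinTwoEquiv fun _ => Fin k → ZMod 2).symm (x, y) i)
        ((piFinTwoEquiv fun _ => Fin k → ZMod 2).symm (x, y) (i + 1)))) =
      sgn (dot k x y) * sgn (dot k y x) := by
    intro x y
    rw [Fin.prod_univ_two, h01, h10]
    simp [piFinTwoEquiv]
  simp only [this]
  have : ∀ x : Fin k → ZMod 2,
      (∑ y : Fin k → ZMod 2, sgn (dot k x y) * sgn (dot k y x)) = 2 ^ k := by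
    intro x; rw [collapse]; simp
  simp only [this]
  simp [Finset.sum_const, two_mul, pow_add]

lemma S_step (k n : ℕ) : S k (n + 2) = 2 ^ k * S k n := by
  classical
  have L1 : S k (n+2) = ∑ x : Fin k → ZMod 2, ∑ y : Fin k → ZMod 2,
      ∑ b' : Fin (n+1) → (Fin k → ZMod 2),
        ∏ i : Fin (n+2+1),
          sgn (dot k
            (Fin.cons (α := fun _ => Fin k → ZMod 2) x (Fin.cons y b') i)
            (Fin.cons (α := fun _ => Fin k → ZMod 2) x (Fin.cons y b') (i+1))) := by
    unfold S
    rw [sum_pi_succ]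
    exact Finset.sum_congr rfl fun x _ => sum_pi_succ _ _
  have a1 : ((0 : Fin (n+2+1)) + 1) = Fin.succ (0 : Fin (n+2)) := by
    rw [zero_add, Fin.succ_zero_eq_one]
  have a2 : Fin.succ (0 : Fin (n+1+1)) + 1 = Fin.succ (Fin.succ (0 : Fin (n+1))) := by
    apply Fin.ext
    simp [Fin.add_def]
  have a3 : ∀ i : Fin n, Fin.succ (Fin.succ (Fin.castSucc i)) + 1
      = Fin.succ (Fin.succ (Fin.castSucc i + 1)) := by
    intro i
    apply Fin.ext
    have hi := i.isLt
    simp [Fin.add_def]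
    rw [Nat.mod_eq_of_lt (by omega), Nat.mod_eq_of_lt (by omega)]
  have a4 : Fin.succ (Fin.succ (Fin.last n)) + 1 = (0 : Fin (n+2+1)) := by
    apply Fin.ext
    simp [Fin.add_def]
  have prodEq : ∀ (x y : Fin k → ZMod 2) (b' : Fin (n+1) → (Fin k → ZMod 2)),
      (∏ i : Fin (n+2+1),
          sgn (dot k
            (Fin.cons (α := fun _ => Fin k → ZMod 2) x (Fin.cons y b') i)
            (Fin.cons (α := fun _ => Fin k → ZMod 2) x (Fin.cons y b') (i+1)))) =
      sgn (dot k x y) * (sgn (dot k y (b' 0)) *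
        ((∏ i : Fin n, sgn (dot k (b' i.castSucc) (b' (i.castSucc + 1)))) *
          sgn (dot k (b' (Fin.last n)) x))) := by
    intro x y b'
    rw [Fin.prod_univ_succ, Fin.prod_univ_succ, Fin.prod_univ_castSucc]
    simp only [a1, a2, a3, a4, Fin.cons_zero, Fin.cons_succ]
  have prodEq2 : ∀ b : Fin (n+1) → (Fin k → ZMod 2),
      (∏ i : Fin (n+1), sgn (dot k (b i) (b (i+1)))) =
      (∏ i : Fin n, sgn (dot k (b i.castSucc) (b (i.castSucc + 1)))) *
        sgn (dot k (b (Fin.last n)) (b 0)) := by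
    intro b
    rw [Fin.prod_univ_castSucc, Fin.last_add_one]
  have hR : S k n = ∑ b : Fin (n+1) → (Fin k → ZMod 2),
      (∏ i : Fin n, sgn (dot k (b i.castSucc) (b (i.castSucc + 1)))) *
        sgn (dot k (b (Fin.last n)) (b 0)) := by
    unfold S
    exact Finset.sum_congr rfl fun b _ => prodEq2 b
  rw [L1, hR]
  simp only [prodEq]
  refine (Finset.sum_congr rfl fun x _ => Finset.sum_comm).trans ?_
  rw [Finset.sum_comm]
  rw [Finset.mul_sum]
  refine Finset.sum_congr rfl fun b' _ => ?_
  have hpt : ∀ x y : Fin k → ZMod 2,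
      sgn (dot k x y) * (sgn (dot k y (b' 0)) *
        ((∏ i : Fin n, sgn (dot k (b' i.castSucc) (b' (i.castSucc + 1)))) *
          sgn (dot k (b' (Fin.last n)) x))) =
      (sgn (dot k x y) * sgn (dot k y (b' 0))) *
        ((∏ i : Fin n, sgn (dot k (b' i.castSucc) (b' (i.castSucc + 1)))) *
          sgn (dot k (b' (Fin.last n)) x)) := by
    intro x y; ring
  simp only [hpt]
  refine (Finset.sum_congr rfl fun x _ => by rw [← Finset.sum_mul, collapse]).trans ?_
  simp only [ite_mul, zero_mul]
  rw [Finset.sum_ite_eq' Finset.univ (b' 0)]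
  simp only [Finset.mem_univ, if_true]

lemma S_val (k : ℕ) : ∀ t, S k (2*t+1) = 2 ^ (k*t + 2*k) := by
  intro t
  induction t with
  | zero => simpa using S_base k
  | succ t ih =>
    have h : 2*(t+1)+1 = (2*t+1)+2 := by ring
    rw [h, S_step, ih, ← pow_add]
    congr 1
    ring

/-- The cyclic character sum over tuples of `m` blocks with `m` even equals
`2^(mk/2 + k)`. -/
theorem cyclic_block_sum_even (k m : ℕ) (hk : 1 ≤ k) (hm : 2 ≤ m) (hme : Even m) :
    (∑ b : Fin m → (Fin k → ZMod 2),
        sgn (∑ i : Fin m, dot k (b i) (b (i + ⟨1, by omega⟩)))) =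
      2 ^ (m * k / 2 + k) := by
  obtain ⟨r, hr⟩ := hme
  obtain ⟨t, rfl⟩ : ∃ t, m = 2*t+1+1 := ⟨r - 1, by omega⟩
  have h1 : (⟨1, by omega⟩ : Fin (2*t+1+1)) = 1 := by
    apply Fin.ext
    simp [Fin.val_one']
  have h2 : (∑ b : Fin (2*t+1+1) → (Fin k → ZMod 2),
        sgn (∑ i, dot k (b i) (b (i + ⟨1, by omega⟩)))) = S k (2*t+1) := by
    unfold S
    refine Finset.sum_congr rfl fun b _ => ?_
    rw [h1]
    exact sgn_sum _ _
  rw [h2, S_val k t]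
  congr 1
  rw [show (2*t+1+1)*k = 2*(t*k+k) by ring, Nat.mul_div_cancel_left _ (by norm_num)]
  rw [show k*t + 2*k = t*k+k+k by ring]
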